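/- arXiv:2204.06104 — 2 statements merged into one kernel-verified Lean document; each statement's English description precedes it below -/
import Mathlib

section
/- If F : [0,T] → Matrix n n ℝ is differentiable with F(0) = 0 and F'(t) commutes with F(t) for all t, then ∫₀ᵗ F'(τ) F(τ)^{k-1} dτ = F(t)ᵏ / k for every k ≥ 1. -/
attribute [local instance] Matrix.linftyOpNormedRing Matrix.linftyOpNormedAlgebra

lemma hasDerivAt_pow_aux {n : ℕ}
    (F F' : ℝ → Matrix (Fin n) (Fin n) ℝ)
    (t : ℝ) (hd : HasDerivAt F (F' t) t)
    (hc : F' t * F t = F t * F' t) :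
    ∀ k : ℕ, 1 ≤ k →
      HasDerivAt (fun τ => F τ ^ k) ((k : ℝ) • (F' t * F t ^ (k - 1))) t := by
  intro k hk
  induction k with
  | zero => omega
  | succ m ih =>
    rcases Nat.eq_or_lt_of_le hk with h1 | h1
    · obtain rfl : m = 0 := by omega
      simpa using hd
    · have hm : 1 ≤ m := by omega
      have ihm := ih hm
      have hmul := ihm.mul hd
      have key : ((m : ℝ) • (F' t * F t ^ (m - 1))) * F t + F t ^ m * F' t
          = ((m + 1 : ℕ) : ℝ) • (F' t * F t ^ (m + 1 - 1)) := by
        have hcomm' : F t ^ m * F' t = F' t * F t ^ m :=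
          ((Commute.symm hc).pow_left m).eq
        have hpow : F t ^ (m - 1) * F t = F t ^ m := by
          conv_rhs => rw [show m = (m - 1) + 1 by omega]
          rw [pow_succ]
        rw [smul_mul_assoc, mul_assoc, hpow, hcomm']
        simp only [Nat.add_sub_cancel]
        push_cast
        rw [add_smul, one_smul]
      have : HasDerivAt (fun τ => F τ ^ m * F τ)
          (((m + 1 : ℕ) : ℝ) • (F' t * F t ^ (m + 1 - 1))) t := key ▸ hmul
      simpa only [← pow_succ] using this

/-- If `F(0) = 0` and `F'(t)` commutes with `F(t)`, then
`∫₀ᵗ F'(τ) F(τ)^(k-1) dτ = F(t)ᵏ / k` for every `k ≥ 1`. -/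
theorem integral_deriv_mul_pow {n : ℕ} (T : ℝ) (hT : 0 < T)
    (F F' : ℝ → Matrix (Fin n) (Fin n) ℝ)
    (hF' : Continuous F') (hderiv : ∀ t, HasDerivAt F (F' t) t)
    (hF0 : F 0 = 0)
    (hcomm : ∀ t ∈ Set.Icc (0:ℝ) T, F' t * F t = F t * F' t) :
    ∀ k : ℕ, 1 ≤ k → ∀ t ∈ Set.Icc (0:ℝ) T,
      (∫ τ in (0:ℝ)..t, F' τ * (F τ) ^ (k - 1)) = ((k : ℝ)⁻¹) • (F t) ^ k := by
  intro k hk t ht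
  obtain ⟨ht0, htT⟩ := ht
  have hFc : Continuous F :=
    continuous_iff_continuousAt.mpr fun x => (hderiv x).continuousAt
  have hsub : Set.uIcc (0:ℝ) t ⊆ Set.Icc 0 T := by
    rw [Set.uIcc_of_le ht0]
    exact Set.Icc_subset_Icc le_rfl htT
  have hint : @IntervalIntegrable _ _ (NormedAddCommGroup.toENormedAddCommMonoid.toENormedAddMonoid) (fun τ => F' τ * F τ ^ (k - 1))
      MeasureTheory.volume 0 t :=
    (hF'.mul (hFc.pow _)).intervalIntegrable 0 t
  have hderiv' : ∀ τ ∈ Set.uIcc (0:ℝ) t,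
      HasDerivAt (fun τ => (k : ℝ)⁻¹ • F τ ^ k) (F' τ * F τ ^ (k - 1)) τ := by
    intro τ hτ
    have h := (hasDerivAt_pow_aux F F' τ (hderiv τ) (hcomm τ (hsub hτ)) k hk).const_smul
      ((k : ℝ)⁻¹)
    have hk0 : (k : ℝ) ≠ 0 := Nat.cast_ne_zero.mpr (by omega)
    simp only [smul_smul, inv_mul_cancel₀ hk0, one_smul] at h
    exact h
  have := intervalIntegral.integral_eq_sub_of_hasDerivAt hderiv' hint
  rw [this, hF0, zero_pow (by omega), smul_zero, sub_zero]
end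

section
/- The sum Φ(t,τ) = ∑_{k=0}^∞ Φ_k(t,τ) of the Peano-Baker series satisfies ∂/∂t Φ(t,τ) = A(t) Φ(t,τ) and Φ(τ,τ) = I. -/
attribute [local instance] Matrix.linftyOpNormedRing Matrix.linftyOpNormedAlgebra

/-- The terms of the Peano-Baker series: `Φ₀(t,τ) = I`,
`Φ_{k+1}(t,τ) = ∫_τ^t A(s) Φ_k(s,τ) ds`. -/
noncomputable def peanoBaker {n : ℕ} (A : ℝ → Matrix (Fin n) (Fin n) ℝ) :
    ℕ → ℝ → ℝ → Matrix (Fin n) (Fin n) ℝ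
  | 0 => fun _ _ => 1
  | k + 1 => fun t τ => ∫ s in τ..t, A s * peanoBaker A k s τ

noncomputable instance pbENormedAddMonoid {n : ℕ} : ENormedAddMonoid (Matrix (Fin n) (Fin n) ℝ) :=
  NormedAddGroup.toENormedAddMonoid

instance pbPseudoMetrizable {n : ℕ} :
    TopologicalSpace.PseudoMetrizableSpace (Matrix (Fin n) (Fin n) ℝ) :=
  inferInstanceAs (TopologicalSpace.PseudoMetrizableSpace (Fin n → Fin n → ℝ))

section Aux

open MeasureTheory Set intervalIntegral

variable {n : ℕ} {T M τ : ℝ} {A : ℝ → Matrix (Fin n) (Fin n) ℝ}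

lemma pb_norm_one : ‖(1 : Matrix (Fin n) (Fin n) ℝ)‖ ≤ 1 := by
  rw [show (1 : Matrix (Fin n) (Fin n) ℝ) = Matrix.diagonal 1 from Matrix.diagonal_one.symm,
    Matrix.linfty_opNorm_diagonal]
  refine (pi_norm_le_iff_of_nonneg zero_le_one).2 fun i => by simp

lemma pb_contOn (hT : 0 ≤ T) (hA : ContinuousOn A (Set.Icc 0 T)) (hτ : τ ∈ Set.Icc 0 T) :
    ∀ k, ContinuousOn (fun t => peanoBaker A k t τ) (Set.Icc 0 T)
  | 0 => continuousOn_const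
  | (k+1) => by
    have ih := pb_contOn hT hA hτ k
    have hG : ContinuousOn (fun s => A s * peanoBaker A k s τ) (Set.Icc 0 T) := hA.mul ih
    have hInt : IntervalIntegrable (fun s => A s * peanoBaker A k s τ) volume 0 T := by
      apply ContinuousOn.intervalIntegrable
      rwa [Set.uIcc_of_le hT]
    have h := continuousOn_primitive_interval' hInt (by rwa [Set.uIcc_of_le hT])
    rw [Set.uIcc_of_le hT] at h
    exact h.congr (fun t _ => by simp [peanoBaker])

lemma abs_int_abs_pow (k : ℕ) (τ t : ℝ) :
    |∫ s in τ..t, |s - τ| ^ k| = |t - τ| ^ (k + 1) / ((k : ℝ) + 1) := by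
  rcases le_total τ t with h | h
  · have h1 : Set.EqOn (fun s => |s - τ| ^ k) (fun s => (s - τ) ^ k) (Set.uIcc τ t) := by
      intro s hs
      rw [Set.uIcc_of_le h] at hs
      simp only []
      rw [abs_of_nonneg (sub_nonneg.2 hs.1)]
    rw [integral_congr h1, integral_comp_sub_right (fun u => u ^ k) τ, integral_pow]
    have h2 : (0:ℝ) ≤ (t - τ) ^ (k + 1) / ((k:ℝ) + 1) :=
      div_nonneg (pow_nonneg (sub_nonneg.2 h) _) (by positivity)
    rw [sub_self, zero_pow (Nat.succ_ne_zero k), sub_zero, abs_of_nonneg h2,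
      abs_of_nonneg (sub_nonneg.2 h)]
  · have h1 : Set.EqOn (fun s => |s - τ| ^ k) (fun s => (τ - s) ^ k) (Set.uIcc τ t) := by
      intro s hs
      rw [Set.uIcc_of_ge h] at hs
      simp only []
      rw [abs_of_nonpos (sub_nonpos.2 hs.2), neg_sub]
    rw [integral_congr h1, integral_comp_sub_left (fun u => u ^ k) τ, integral_pow]
    rw [sub_self, zero_pow (Nat.succ_ne_zero k), zero_sub, abs_sub_comm t τ,
      abs_of_nonneg (sub_nonneg.2 h)]
    rw [abs_div, abs_neg,
      abs_of_nonneg (pow_nonneg (sub_nonneg.2 h) (k+1)),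
      abs_of_nonneg (by positivity : (0:ℝ) ≤ ((k:ℝ) + 1))]

lemma pb_bound (hM0 : 0 ≤ M) (hM : ∀ s ∈ Set.Icc 0 T, ‖A s‖ ≤ M)
    (hT : 0 ≤ T) (hA : ContinuousOn A (Set.Icc 0 T)) (hτ : τ ∈ Set.Icc 0 T) :
    ∀ k, ∀ t ∈ Set.Icc 0 T, ‖peanoBaker A k t τ‖ ≤ M ^ k * |t - τ| ^ k / (k.factorial : ℝ)
  | 0 => fun t _ => by
    rw [show peanoBaker A 0 t τ = 1 from rfl]
    simp only [pow_zero, Nat.factorial_zero, Nat.cast_one, one_mul, div_one]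
    exact pb_norm_one
  | (k+1) => by
    intro t ht
    have ih := pb_bound hM0 hM hT hA hτ k
    have hsub : Set.uIcc τ t ⊆ Set.Icc 0 T := Set.uIcc_subset_Icc hτ ht
    have hbd : ∀ᵐ s ∂volume.restrict (Set.uIoc τ t),
        ‖A s * peanoBaker A k s τ‖ ≤ M ^ (k+1) / (k.factorial : ℝ) * |s - τ| ^ k := by
      refine (ae_restrict_iff' measurableSet_uIoc).2 (Filter.Eventually.of_forall ?_)
      intro s hs
      have hsIcc : s ∈ Set.Icc 0 T := hsub (Set.uIoc_subset_uIcc hs)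
      calc ‖A s * peanoBaker A k s τ‖ ≤ ‖A s‖ * ‖peanoBaker A k s τ‖ := norm_mul_le _ _
        _ ≤ M * (M ^ k * |s - τ| ^ k / (k.factorial : ℝ)) :=
            mul_le_mul (hM s hsIcc) (ih s hsIcc) (norm_nonneg _) hM0
        _ = M ^ (k+1) / (k.factorial : ℝ) * |s - τ| ^ k := by ring
    have hgint : IntervalIntegrable
        (fun s => M ^ (k+1) / (k.factorial : ℝ) * |s - τ| ^ k) volume τ t :=
      (Continuous.intervalIntegrable (by continuity) τ t)
    have h1 : ‖peanoBaker A (k+1) t τ‖ ≤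
        |∫ s in τ..t, M ^ (k+1) / (k.factorial : ℝ) * |s - τ| ^ k| := by
      show ‖∫ s in τ..t, A s * peanoBaker A k s τ‖ ≤ _
      exact norm_integral_le_abs_of_norm_le hbd hgint
    have h2 : (∫ s in τ..t, M ^ (k+1) / (k.factorial : ℝ) * |s - τ| ^ k)
        = M ^ (k+1) / (k.factorial : ℝ) * ∫ s in τ..t, |s - τ| ^ k :=
      intervalIntegral.integral_const_mul _ _
    have hc0 : (0:ℝ) ≤ M ^ (k+1) / (k.factorial : ℝ) := by positivity
    rw [h2, abs_mul, abs_of_nonneg hc0, abs_int_abs_pow k τ t] at h1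
    refine h1.trans (le_of_eq ?_)
    rw [Nat.factorial_succ, Nat.cast_mul, Nat.cast_add, Nat.cast_one]
    rw [div_mul_div_comm, mul_comm ((k.factorial : ℝ)) _]

lemma pb_swap_le {F : ℕ → ℝ → Matrix (Fin n) (Fin n) ℝ} {c : ℕ → ℝ}
    (hT : 0 ≤ T) (hF : ∀ i, ContinuousOn (F i) (Set.Icc 0 T))
    (hbound : ∀ i, ∀ s ∈ Set.Icc 0 T, ‖F i s‖ ≤ c i) (hc : Summable c)
    {a b : ℝ} (ha : a ∈ Set.Icc 0 T) (hb : b ∈ Set.Icc 0 T) (hab : a ≤ b) :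
    (∫ s in a..b, (∑' i, F i s)) = ∑' i, ∫ s in a..b, F i s := by
  have hsub : Set.Ioc a b ⊆ Set.Icc 0 T := fun s hs =>
    ⟨ha.1.trans hs.1.le, hs.2.trans hb.2⟩
  have hc0 : ∀ i, 0 ≤ c i := fun i =>
    (norm_nonneg _).trans (hbound i 0 ⟨le_refl 0, hT⟩)
  have hmeas : ∀ i, AEStronglyMeasurable (F i) (volume.restrict (Set.Ioc a b)) :=
    fun i => ((hF i).mono hsub).aestronglyMeasurable measurableSet_Ioc
  have hfin : (∑' i, ∫⁻ s, ‖F i s‖₊ ∂(volume.restrict (Set.Ioc a b))) ≠ ⊤ := by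
    have key : ∀ i, (∫⁻ s, ‖F i s‖₊ ∂(volume.restrict (Set.Ioc a b)))
        ≤ ENNReal.ofReal (c i * (b - a)) := by
      intro i
      calc (∫⁻ s, ‖F i s‖₊ ∂(volume.restrict (Set.Ioc a b)))
          ≤ ∫⁻ _ in Set.Ioc a b, ENNReal.ofReal (c i) ∂volume := by
            refine setLIntegral_mono' measurableSet_Ioc (fun s hs => ?_)
            rw [← enorm_eq_nnnorm, ← ofReal_norm_eq_enorm]
            exact ENNReal.ofReal_le_ofReal (hbound i s (hsub hs))
        _ = ENNReal.ofReal (c i) * ENNReal.ofReal (b - a) := by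
            rw [lintegral_const, Measure.restrict_apply_univ, Real.volume_Ioc]
        _ = ENNReal.ofReal (c i * (b - a)) := (ENNReal.ofReal_mul (hc0 i)).symm
    refine ne_top_of_le_ne_top ?_ (ENNReal.tsum_le_tsum key)
    rw [← ENNReal.ofReal_tsum_of_nonneg (fun i => mul_nonneg (hc0 i) (sub_nonneg.2 hab))
      (hc.mul_right _)]
    exact ENNReal.ofReal_ne_top
  rw [integral_of_le hab]
  refine (MeasureTheory.integral_tsum hmeas hfin).trans ?_
  exact tsum_congr fun i => (integral_of_le hab).symm

lemma pb_swap {F : ℕ → ℝ → Matrix (Fin n) (Fin n) ℝ} {c : ℕ → ℝ}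
    (hT : 0 ≤ T) (hF : ∀ i, ContinuousOn (F i) (Set.Icc 0 T))
    (hbound : ∀ i, ∀ s ∈ Set.Icc 0 T, ‖F i s‖ ≤ c i) (hc : Summable c)
    {a b : ℝ} (ha : a ∈ Set.Icc 0 T) (hb : b ∈ Set.Icc 0 T) :
    (∫ s in a..b, (∑' i, F i s)) = ∑' i, ∫ s in a..b, F i s := by
  rcases le_total a b with hab | hab
  · exact pb_swap_le hT hF hbound hc ha hb hab
  · rw [integral_symm b a, pb_swap_le hT hF hbound hc hb ha hab, ← tsum_neg]
    exact tsum_congr fun i => (integral_symm b a).symm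

end Aux

/-- The sum `Φ(t,τ) = ∑_k Φ_k(t,τ)` of the Peano-Baker series satisfies
`∂/∂t Φ(t,τ) = A(t) Φ(t,τ)` and `Φ(τ,τ) = I`. -/
theorem peanoBaker_sum_is_stateTransition {n : ℕ} (T : ℝ) (hT : 0 < T)
    (A : ℝ → Matrix (Fin n) (Fin n) ℝ) (hA : ContinuousOn A (Set.Icc 0 T))
    (Φ : ℝ → ℝ → Matrix (Fin n) (Fin n) ℝ)
    (hΦ : ∀ t τ, Φ t τ = ∑' k : ℕ, peanoBaker A k t τ) :
    ∀ τ ∈ Set.Icc (0:ℝ) T,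
      (∀ t ∈ Set.Icc (0:ℝ) T,
        HasDerivWithinAt (fun s => Φ s τ) (A t * Φ t τ) (Set.Icc 0 T) t) ∧
      Φ τ τ = 1 := by
  intro τ hτ
  obtain ⟨M₀, hM₀⟩ := isCompact_Icc.exists_bound_of_continuousOn hA
  set M : ℝ := max M₀ 0 with hMdef
  have hM0 : 0 ≤ M := le_max_right _ _
  have hM : ∀ s ∈ Set.Icc (0:ℝ) T, ‖A s‖ ≤ M := fun s hs =>
    (hM₀ s hs).trans (le_max_left _ _)
  set u : ℕ → ℝ := fun k => (M * T) ^ k / (k.factorial : ℝ) with hudef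
  have hu : Summable u := Real.summable_pow_div_factorial (M * T)
  have hb : ∀ k, ∀ t ∈ Set.Icc (0:ℝ) T, ‖peanoBaker A k t τ‖ ≤ u k := by
    intro k t ht
    refine (pb_bound hM0 hM hT.le hA hτ k t ht).trans ?_
    have habs : |t - τ| ≤ T := by
      rw [abs_le]
      constructor <;> [linarith [ht.1, hτ.2]; linarith [ht.2, hτ.1]]
    have hnum : M ^ k * |t - τ| ^ k ≤ (M * T) ^ k := by
      rw [mul_pow]
      exact mul_le_mul_of_nonneg_left (pow_le_pow_left₀ (abs_nonneg _) habs k)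
        (pow_nonneg hM0 k)
    simp only [hudef]
    gcongr
  have hsum : ∀ t ∈ Set.Icc (0:ℝ) T, Summable (fun k => peanoBaker A k t τ) := fun t ht =>
    Summable.of_norm_bounded hu (fun k => hb k t ht)
  have hΦcont : ContinuousOn (fun s => Φ s τ) (Set.Icc 0 T) := by
    have h := continuousOn_tsum (f := fun k t => peanoBaker A k t τ)
      (fun k => pb_contOn hT.le hA hτ k) hu (fun k x hx => hb k x hx)
    exact h.congr fun s _ => hΦ s τ
  set g : ℝ → Matrix (Fin n) (Fin n) ℝ := fun s => A s * Φ s τ with hgdef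
  have hg : ContinuousOn g (Set.Icc 0 T) := hA.mul hΦcont
  have keyId : ∀ t ∈ Set.Icc (0:ℝ) T, Φ t τ = 1 + ∫ s in τ..t, g s := by
    intro t ht
    have h1 : Φ t τ = peanoBaker A 0 t τ + ∑' k, peanoBaker A (k+1) t τ := by
      rw [hΦ]; exact Summable.tsum_eq_zero_add (hsum t ht)
    have hFc : ∀ i, ContinuousOn (fun s => A s * peanoBaker A i s τ) (Set.Icc 0 T) :=
      fun i => hA.mul (pb_contOn hT.le hA hτ i)
    have hFb : ∀ i, ∀ s ∈ Set.Icc (0:ℝ) T, ‖A s * peanoBaker A i s τ‖ ≤ M * u i := by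
      intro i s hs
      calc ‖A s * peanoBaker A i s τ‖ ≤ ‖A s‖ * ‖peanoBaker A i s τ‖ := norm_mul_le _ _
        _ ≤ M * u i := mul_le_mul (hM s hs) (hb i s hs) (norm_nonneg _) hM0
    have h2 : ∑' k, peanoBaker A (k+1) t τ
        = ∫ s in τ..t, (∑' k, A s * peanoBaker A k s τ) := by
      rw [pb_swap hT.le hFc hFb (hu.mul_left M) hτ ht]
      exact tsum_congr fun k => by simp [peanoBaker]
    have h3 : Set.EqOn (fun s => ∑' k, A s * peanoBaker A k s τ) g (Set.uIcc τ t) := by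
      intro s hs
      have hsIcc : s ∈ Set.Icc (0:ℝ) T := Set.uIcc_subset_Icc hτ ht hs
      simp only [hgdef]
      rw [(hsum s hsIcc).tsum_mul_left (A s), hΦ s τ]
    rw [h1, h2, intervalIntegral.integral_congr h3]
    simp [peanoBaker]
  have hΦττ : Φ τ τ = 1 := by
    rw [keyId τ hτ, intervalIntegral.integral_same, add_zero]
  refine ⟨?_, hΦττ⟩
  intro t ht
  have hInt : IntervalIntegrable g MeasureTheory.volume τ t :=
    (hg.mono (Set.uIcc_subset_Icc hτ ht)).intervalIntegrable
  have hgt : A t * Φ t τ = g t := rfl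
  rw [hgt]
  have hR : t < T → HasDerivWithinAt (fun s => Φ s τ) (g t)
      (Set.Icc 0 T ∩ Set.Ici t) t := by
    intro htT
    have hmem : Set.Ioc t T ∈ nhdsWithin t (Set.Ioi t) :=
      Ioc_mem_nhdsGT_of_mem ⟨le_refl t, htT⟩
    have hsub : Set.Ioc t T ⊆ Set.Icc 0 T := fun s hs => ⟨ht.1.trans hs.1.le, hs.2⟩
    have hmeas : StronglyMeasurableAtFilter g (nhdsWithin t (Set.Ioi t)) :=
      ⟨Set.Ioc t T, hmem, (hg.mono hsub).aestronglyMeasurable measurableSet_Ioc⟩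
    have hcont : ContinuousWithinAt g (Set.Ioi t) t :=
      ((hg t ht).mono hsub).mono_of_mem_nhdsWithin hmem
    have hF := intervalIntegral.integral_hasDerivWithinAt_right
      (s := Set.Ici t) (t := Set.Ioi t) hInt hmeas hcont
    have hF' := (hF.const_add (1 : Matrix (Fin n) (Fin n) ℝ)).mono
      (Set.inter_subset_right : Set.Icc 0 T ∩ Set.Ici t ⊆ Set.Ici t)
    exact hF'.congr (fun x hx => keyId x hx.1) (keyId t ht)
  have hL : 0 < t → HasDerivWithinAt (fun s => Φ s τ) (g t)
      (Set.Icc 0 T ∩ Set.Iic t) t := by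
    intro h0t
    have hmem : Set.Icc 0 t ∈ nhdsWithin t (Set.Iic t) :=
      Icc_mem_nhdsLE_of_mem ⟨h0t, le_refl t⟩
    have hsub : Set.Icc 0 t ⊆ Set.Icc 0 T := fun s hs => ⟨hs.1, hs.2.trans ht.2⟩
    have hmeas : StronglyMeasurableAtFilter g (nhdsWithin t (Set.Iic t)) :=
      ⟨Set.Icc 0 t, hmem, (hg.mono hsub).aestronglyMeasurable measurableSet_Icc⟩
    have hcont : ContinuousWithinAt g (Set.Iic t) t :=
      ((hg t ht).mono hsub).mono_of_mem_nhdsWithin hmem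
    have hF := intervalIntegral.integral_hasDerivWithinAt_right
      (s := Set.Iic t) (t := Set.Iic t) hInt hmeas hcont
    have hF' := (hF.const_add (1 : Matrix (Fin n) (Fin n) ℝ)).mono
      (Set.inter_subset_right : Set.Icc 0 T ∩ Set.Iic t ⊆ Set.Iic t)
    exact hF'.congr (fun x hx => keyId x hx.1) (keyId t ht)
  rcases eq_or_lt_of_le ht.1 with h0 | h0
  · have h := hR (by rw [← h0]; exact hT)
    have heq : Set.Icc (0:ℝ) T ∩ Set.Ici t = Set.Icc 0 T := by
      rw [← h0]; exact Set.inter_eq_left.2 fun x hx => hx.1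
    rwa [heq] at h
  · rcases eq_or_lt_of_le ht.2 with hT' | hT'
    · have h := hL h0
      have heq : Set.Icc (0:ℝ) T ∩ Set.Iic t = Set.Icc 0 T := by
        rw [hT']; exact Set.inter_eq_left.2 fun x hx => hx.2
      rwa [heq] at h
    · have h := (hL h0).union (hR hT')
      have heq : (Set.Icc (0:ℝ) T ∩ Set.Iic t) ∪ (Set.Icc 0 T ∩ Set.Ici t)
          = Set.Icc 0 T := by
        rw [← Set.inter_union_distrib_left, Set.Iic_union_Ici, Set.inter_univ]
      rwa [heq] at h
end
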